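/- Let d = 1, k > 0, c > 0, m = 0. A trajectory of the system Ġ = cF − FG, Ḟ = −F² − kG starting at (G₀, F₀) with G₀ < c is periodic (the phase curve is closed in the half-plane G < c) if and only if F₀² < k(c − 2G₀). -/

import Mathlib

open Real Filter Set MeasureTheory intervalIntegral Topology

lemma forward_dir (k c F₀ G₀ : ℝ) (hk : 0 < k) (hc : 0 < c) (hG₀ : G₀ < c)
    (h : F₀ ^ 2 < k * (c - 2 * G₀)) :
    (∃ F G : ℝ → ℝ,
      (∀ t : ℝ, HasDerivAt G (c * F t - F t * G t) t ∧
                HasDerivAt F (-(F t) ^ 2 - k * G t) t) ∧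
      F 0 = F₀ ∧ G 0 = G₀ ∧
      ∃ T > 0, ∀ t : ℝ, F (t + T) = F t ∧ G (t + T) = G t) := by
  set u₀ : ℝ := c - G₀ with hu₀def
  have hu₀ : 0 < u₀ := by simp [hu₀def]; linarith
  set ω : ℝ := Real.sqrt (k * c) with hωdef
  have hω2 : ω * ω = k * c := Real.mul_self_sqrt (by positivity)
  have hωpos : 0 < ω := Real.sqrt_pos.mpr (by positivity)
  set A : ℝ := 1 / u₀ - 1 / c with hAdef
  set B : ℝ := F₀ / (ω * u₀) with hBdef
  have key : k * (c - u₀) ^ 2 + c * F₀ ^ 2 < k * u₀ ^ 2 := by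
    rw [hu₀def]
    nlinarith [mul_lt_mul_of_pos_left h hc]
  have hB2 : B ^ 2 = F₀ ^ 2 / (k * c * u₀ ^ 2) := by
    rw [hBdef, div_pow, mul_pow, show ω ^ 2 = k * c from by rw [sq]; exact hω2]
  have hAB : A ^ 2 + B ^ 2 < 1 / c ^ 2 := by
    rw [hAdef, hB2]
    have hEq : 1 / c ^ 2 - ((1 / u₀ - 1 / c) ^ 2 + F₀ ^ 2 / (k * c * u₀ ^ 2))
        = (k * u₀ ^ 2 - k * (c - u₀) ^ 2 - c * F₀ ^ 2) / (k * c ^ 2 * u₀ ^ 2) := by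
      field_simp
      ring
    have hpos : 0 < (k * u₀ ^ 2 - k * (c - u₀) ^ 2 - c * F₀ ^ 2) / (k * c ^ 2 * u₀ ^ 2) :=
      div_pos (by linarith) (by positivity)
    linarith
  set p : ℝ → ℝ := fun t => 1 / c + A * Real.cos (ω * t) + B * Real.sin (ω * t) with hpdef
  set q : ℝ → ℝ := fun t => ω * (B * Real.cos (ω * t) - A * Real.sin (ω * t)) with hqdef
  have hbound : ∀ t : ℝ, (A * Real.cos (ω * t) + B * Real.sin (ω * t)) ^ 2 ≤ A ^ 2 + B ^ 2 := by
    intro t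
    nlinarith [sq_nonneg (A * Real.sin (ω*t) - B * Real.cos (ω*t)), Real.sin_sq_add_cos_sq (ω*t)]
  have hppos : ∀ t : ℝ, 0 < p t := by
    intro t
    have h1 := hbound t
    have h2 : (0:ℝ) < 1 / c := by positivity
    by_contra hcon
    push_neg at hcon
    simp only [hpdef] at hcon
    have hxle : A * Real.cos (ω * t) + B * Real.sin (ω * t) ≤ -(1 / c) := by linarith
    have hb : (1 / c) * (1 / c) = 1 / c ^ 2 := by ring
    have hsq : 1 / c ^ 2 ≤ (A * Real.cos (ω * t) + B * Real.sin (ω * t)) ^ 2 := by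
      nlinarith [sq_nonneg (A * Real.cos (ω * t) + B * Real.sin (ω * t) + 1 / c)]
    exact absurd (lt_of_le_of_lt (hsq.trans h1) hAB) (lt_irrefl _)
  have hlin : ∀ t : ℝ, HasDerivAt (fun s : ℝ => ω * s) ω t := by
    intro t
    simpa using (hasDerivAt_id t).const_mul ω
  have hp : ∀ t : ℝ, HasDerivAt p (q t) t := by
    intro t
    have : HasDerivAt p (0 + A * (-Real.sin (ω * t) * ω) + B * (Real.cos (ω * t) * ω)) t :=
      ((hasDerivAt_const t (1/c)).add (((hlin t).cos).const_mul A)).add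
        (((hlin t).sin).const_mul B)
    convert this using 1
    simp [hqdef]; ring
  have hq : ∀ t : ℝ, HasDerivAt q (k - k * c * p t) t := by
    intro t
    have : HasDerivAt q (ω * (B * (-Real.sin (ω * t) * ω) - A * (Real.cos (ω * t) * ω))) t :=
      ((((hlin t).cos).const_mul B).sub (((hlin t).sin).const_mul A)).const_mul ω
    convert this using 1
    have hcc : c * (1 / c) = 1 := mul_one_div_cancel (ne_of_gt hc)
    simp only [hpdef]
    linear_combination (A * Real.cos (ω * t) + B * Real.sin (ω * t)) * hω2 + (-k) * hcc
  have hp0 : p 0 = 1 / u₀ := by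
    simp only [hpdef, mul_zero, Real.cos_zero, Real.sin_zero, mul_one, add_zero, hAdef]
    ring
  have hq0 : q 0 = ω * B := by
    simp only [hqdef, mul_zero, Real.cos_zero, Real.sin_zero, mul_one, mul_zero, sub_zero]
  have harg : ∀ t : ℝ, ω * (t + 2 * π / ω) = ω * t + 2 * π := by
    intro t
    field_simp
  have hpT : ∀ t : ℝ, p (t + 2 * π / ω) = p t := by
    intro t
    simp only [hpdef, harg t, Real.cos_add_two_pi, Real.sin_add_two_pi]
  have hqT : ∀ t : ℝ, q (t + 2 * π / ω) = q t := by
    intro t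
    simp only [hqdef, harg t, Real.cos_add_two_pi, Real.sin_add_two_pi]
  have hB0 : ω * B * u₀ = F₀ := by
    rw [hBdef]
    field_simp
  clear hbound hAB hB2 key h
  clear_value p q
  clear hpdef hqdef hAdef hBdef
  refine ⟨fun t => q t / p t, fun t => c - (p t)⁻¹, ?_, ?_, ?_, 2 * π / ω, by positivity, ?_⟩
  · intro t
    have hpne : p t ≠ 0 := ne_of_gt (hppos t)
    constructor
    · have hd : HasDerivAt (fun s => c - (p s)⁻¹) (0 - (-(q t) / p t ^ 2)) t :=
        (hasDerivAt_const t c).sub ((hp t).inv hpne)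
      convert hd using 1
      field_simp
      ring
    · have hd : HasDerivAt (fun s => q s / p s)
          (((k - k * c * p t) * p t - q t * q t) / p t ^ 2) t := (hq t).div (hp t) hpne
      convert hd using 1
      field_simp
      ring
  · show q 0 / p 0 = F₀
    rw [hp0, hq0, one_div, div_inv_eq_mul]
    exact hB0
  · show c - (p 0)⁻¹ = G₀
    rw [hp0, one_div, inv_inv, hu₀def]
    ring
  · intro t
    constructor
    · show q (t + 2 * π / ω) / p (t + 2 * π / ω) = q t / p t
      rw [hpT t, hqT t]
    · show c - (p (t + 2 * π / ω))⁻¹ = c - (p t)⁻¹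
      rw [hpT t]


lemma backward_dir (k c F₀ G₀ : ℝ) (hk : 0 < k) (hc : 0 < c) (hG₀ : G₀ < c)
    (hex : ∃ F G : ℝ → ℝ,
      (∀ t : ℝ, HasDerivAt G (c * F t - F t * G t) t ∧
                HasDerivAt F (-(F t) ^ 2 - k * G t) t) ∧
      F 0 = F₀ ∧ G 0 = G₀ ∧
      ∃ T > 0, ∀ t : ℝ, F (t + T) = F t ∧ G (t + T) = G t) :
    F₀ ^ 2 < k * (c - 2 * G₀) := by
  obtain ⟨F, G, hd, hF0, hG0, T, hT, hper⟩ := hex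
  by_contra hcon
  push_neg at hcon
  -- continuity of F
  have hFc : Continuous F :=
    continuous_iff_continuousAt.mpr fun t => (hd t).2.continuousAt
  have hFint : ∀ a b : ℝ, IntervalIntegrable F volume a b :=
    fun a b => hFc.intervalIntegrable a b
  -- antiderivative of F
  set Φ : ℝ → ℝ := fun t => ∫ s in (0:ℝ)..t, F s with hΦdef
  have hΦ : ∀ t : ℝ, HasDerivAt Φ (F t) t :=
    fun t => (hFc.integral_hasStrictDerivAt 0 t).hasDerivAt
  have hΦ0 : Φ 0 = 0 := intervalIntegral.integral_same
  -- generic conservation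
  have hconst : ∀ (a : ℝ) (y : ℝ → ℝ), (∀ t, HasDerivAt y (a * F t * y t) t) →
      ∀ t, y t * Real.exp (-a * Φ t) = y 0 := by
    intro a y hy t
    have hD : ∀ s : ℝ, HasDerivAt (fun r => y r * Real.exp (-a * Φ r)) 0 s := by
      intro s
      have h1 : HasDerivAt (fun r => Real.exp (-a * Φ r)) (Real.exp (-a * Φ s) * (-a * F s)) s :=
        (((hΦ s).const_mul (-a)).exp)
      have h2 := (hy s).mul h1
      exact h2.congr_deriv (by ring)
    have := is_const_of_deriv_eq_zero (fun s => (hD s).differentiableAt)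
      (fun s => (hD s).deriv) t 0
    simpa [hΦ0] using this
  -- conservation of u = c - G
  have hu : ∀ t : ℝ, (c - G t) * Real.exp (Φ t) = c - G₀ := by
    have h1 : ∀ t : ℝ, HasDerivAt (fun s => c - G s) ((-1) * F t * (c - G t)) t := by
      intro t
      have := (hasDerivAt_const t c).sub (hd t).1
      exact this.congr_deriv (by ring)
    have h2 := hconst (-1) (fun s => c - G s) h1
    intro t
    have := h2 t
    simpa [hG0] using this
  -- conservation of W
  set W : ℝ → ℝ := fun t => F t ^ 2 + 2 * k * G t - k * c with hWdef
  have hWd : ∀ t : ℝ, HasDerivAt W ((-2) * F t * W t) t := by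
    intro t
    have h1 : HasDerivAt (fun s => F s ^ 2) (2 * F t ^ 1 * (-(F t) ^ 2 - k * G t)) t := by
      simpa using (hd t).2.fun_pow 2
    have h2 := (h1.add ((hd t).1.const_mul (2 * k))).sub_const (k * c)
    exact h2.congr_deriv (by simp only [hWdef]; ring)
  have hWc := hconst (-2) W hWd
  have hW0 : 0 ≤ W 0 := by
    simp only [hWdef, hF0, hG0]
    nlinarith
  have hWt : ∀ t : ℝ, 0 ≤ W t := by
    intro t
    have h1 := hWc t
    nlinarith [Real.exp_pos (-(-2) * Φ t)]
  -- F vanishing forces G ≥ c/2, hence strictly negative derivative of F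
  have hGhalf : ∀ t : ℝ, F t = 0 → c / 2 ≤ G t := by
    intro t h0
    have := hWt t
    simp only [hWdef, h0] at this
    nlinarith
  by_cases hz : ∃ t₀ : ℝ, F t₀ = 0
  · -- F has a zero: contradiction via slope argument
    obtain ⟨t₀, h0⟩ := hz
    have hderiv_neg : ∀ s : ℝ, F s = 0 → (-(F s) ^ 2 - k * G s) < 0 := by
      intro s hs
      have := hGhalf s hs
      rw [hs]
      nlinarith
    have hslope : ∀ s : ℝ, Tendsto (slope F s) (𝓝[≠] s) (𝓝 (-(F s) ^ 2 - k * G s)) :=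
      fun s => hasDerivAt_iff_tendsto_slope.mp (hd s).2
    -- a point a ∈ (t₀, t₀ + T) with F a < 0
    have hev1 : ∀ᶠ x in 𝓝[>] t₀, slope F t₀ x < 0 :=
      ((hslope t₀).mono_left (nhdsWithin_mono _ fun y hy => ne_of_gt hy)).eventually_lt_const
        (hderiv_neg t₀ h0)
    have hev2 : ∀ᶠ x in 𝓝[>] t₀, x < t₀ + T :=
      (eventually_lt_nhds (by linarith : t₀ < t₀ + T)).filter_mono nhdsWithin_le_nhds
    have hev3 : ∀ᶠ x in 𝓝[>] t₀, t₀ < x := eventually_mem_nhdsWithin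
    obtain ⟨a, hsl, haT, ht₀a⟩ := (hev1.and (hev2.and hev3)).exists
    have hFa : F a < 0 := by
      rw [slope_def_field, h0, sub_zero] at hsl
      rcases div_neg_iff.mp hsl with ⟨h1, h2⟩ | ⟨h1, h2⟩
      · linarith
      · exact h1
    -- a point b ∈ (a, t₀ + T) with F b > 0
    have h0' : F (t₀ + T) = 0 := by rw [(hper t₀).1, h0]
    have hev1' : ∀ᶠ x in 𝓝[<] (t₀ + T), slope F (t₀ + T) x < 0 :=
      ((hslope (t₀ + T)).mono_left (nhdsWithin_mono _ fun y hy => ne_of_lt hy)).eventually_lt_const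
        (hderiv_neg (t₀ + T) h0')
    have hev2' : ∀ᶠ x in 𝓝[<] (t₀ + T), a < x :=
      (eventually_gt_nhds haT).filter_mono nhdsWithin_le_nhds
    have hev3' : ∀ᶠ x in 𝓝[<] (t₀ + T), x < t₀ + T := eventually_mem_nhdsWithin
    obtain ⟨b, hslb, hab, hbT⟩ := (hev1'.and (hev2'.and hev3')).exists
    have hFb : 0 < F b := by
      rw [slope_def_field, h0', sub_zero] at hslb
      rcases div_neg_iff.mp hslb with ⟨h1, h2⟩ | ⟨h1, h2⟩
      · exact h1
      · linarith
    -- first zero of F in [a, b]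
    set Z : Set ℝ := Set.Icc a b ∩ F ⁻¹' {0} with hZdef
    have hZclosed : IsClosed Z := isClosed_Icc.inter (isClosed_singleton.preimage hFc)
    have hZne : Z.Nonempty := by
      have h00 : (0:ℝ) ∈ Set.Icc (F a) (F b) := ⟨hFa.le, hFb.le⟩
      obtain ⟨s, hsmem, hs0⟩ := intermediate_value_Icc hab.le (hFc.continuousOn) h00
      exact ⟨s, hsmem, hs0⟩
    have hbdd : BddBelow Z := ⟨a, fun x hx => hx.1.1⟩
    set s₀ : ℝ := sInf Z with hs₀def
    have hs₀Z : s₀ ∈ Z := hZclosed.csInf_mem hZne hbdd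
    have hFs₀ : F s₀ = 0 := hs₀Z.2
    have has₀ : a < s₀ := by
      rcases lt_or_eq_of_le hs₀Z.1.1 with h | h
      · exact h
      · exfalso
        rw [← h] at hFs₀
        linarith
    have hnegI : ∀ t : ℝ, a ≤ t → t < s₀ → F t < 0 := by
      intro t hat hts
      have htb : t ≤ b := le_trans hts.le hs₀Z.1.2
      have hne : F t ≠ 0 := by
        intro h
        exact absurd (csInf_le hbdd ⟨⟨hat, htb⟩, h⟩) (not_le.mpr hts)
      rcases lt_or_gt_of_ne hne with h | h
      · exact h
      · exfalso
        have h00 : (0:ℝ) ∈ Set.Icc (F a) (F t) := ⟨hFa.le, h.le⟩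
        obtain ⟨s, hsmem, hs0⟩ := intermediate_value_Icc hat (hFc.continuousOn) h00
        have hsZ : s ∈ Z := ⟨⟨hsmem.1, le_trans hsmem.2 htb⟩, hs0⟩
        have := csInf_le hbdd hsZ
        have : s₀ ≤ t := le_trans this hsmem.2
        linarith
    -- contradiction: derivative of F at s₀ is both < 0 and ≥ 0
    have hd_neg : (-(F s₀) ^ 2 - k * G s₀) < 0 := hderiv_neg s₀ hFs₀
    have htend : Tendsto (slope F s₀) (𝓝[<] s₀) (𝓝 (-(F s₀) ^ 2 - k * G s₀)) :=
      (hslope s₀).mono_left (nhdsWithin_mono _ fun y hy => ne_of_lt hy)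
    have hev : ∀ᶠ x in 𝓝[<] s₀, 0 ≤ slope F s₀ x := by
      filter_upwards [(eventually_gt_nhds has₀).filter_mono nhdsWithin_le_nhds,
        eventually_mem_nhdsWithin] with x hax (hxs : x < s₀)
      have hFx : F x < 0 := hnegI x hax.le hxs
      rw [slope_def_field, hFs₀, sub_zero]
      exact le_of_lt (div_pos_iff.mpr (Or.inr ⟨hFx, sub_neg.mpr hxs⟩))
    have : 0 ≤ (-(F s₀) ^ 2 - k * G s₀) := ge_of_tendsto htend hev
    linarith
  · -- F never vanishes
    push_neg at hz
    have hsign : (∀ t : ℝ, 0 < F t) ∨ (∀ t : ℝ, F t < 0) := by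
      rcases lt_or_gt_of_ne (hz 0) with hneg | hpos
      · right
        intro t
        rcases lt_or_gt_of_ne (hz t) with h | h
        · exact h
        · exfalso
          have : (0:ℝ) ∈ Set.uIcc (F 0) (F t) := Set.mem_uIcc.mpr (Or.inl ⟨le_of_lt hneg, le_of_lt h⟩)
          obtain ⟨s, _, hs⟩ := intermediate_value_uIcc (hFc.continuousOn (s := Set.uIcc 0 t)) this
          exact hz s hs
      · left
        intro t
        rcases lt_or_gt_of_ne (hz t) with h | h
        · exfalso
          have : (0:ℝ) ∈ Set.uIcc (F 0) (F t) := Set.mem_uIcc.mpr (Or.inr ⟨le_of_lt h, le_of_lt hpos⟩)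
          obtain ⟨s, _, hs⟩ := intermediate_value_uIcc (hFc.continuousOn (s := Set.uIcc 0 t)) this
          exact hz s hs
        · exact h
    have hGT : G T = G₀ := by
      have := (hper 0).2
      rwa [zero_add, hG0] at this
    have hΦT : Φ T = 0 := by
      have h1 := hu T
      rw [hGT] at h1
      have h2 : (0:ℝ) < c - G₀ := by linarith
      field_simp at h1
      exact Real.exp_eq_one_iff _ |>.mp h1
    rcases hsign with hpos | hneg
    · have : 0 < Φ T := intervalIntegral_pos_of_pos (hFint 0 T) hpos hT
      linarith
    · have h1 : 0 < ∫ s in (0:ℝ)..T, (-F s) :=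
        intervalIntegral_pos_of_pos ((hFint 0 T).neg) (fun x => by linarith [hneg x]) hT
      rw [intervalIntegral.integral_neg] at h1
      have : Φ T < 0 := by simpa [hΦdef] using h1
      linarith

/-- `d = 1`, `k > 0`, `c > 0`, `m = 0`: the trajectory of `Ġ = cF − FG`, `Ḟ = −F² − kG`
through `(G₀, F₀)` with `G₀ < c` is periodic (closed phase curve in `G < c`) iff
`F₀² < k(c − 2G₀)`. -/
theorem periodic_criterion_dim1 (k c F₀ G₀ : ℝ) (hk : 0 < k) (hc : 0 < c)
    (hG₀ : G₀ < c) :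
    (∃ F G : ℝ → ℝ,
      (∀ t : ℝ, HasDerivAt G (c * F t - F t * G t) t ∧
                HasDerivAt F (-(F t) ^ 2 - k * G t) t) ∧
      F 0 = F₀ ∧ G 0 = G₀ ∧
      ∃ T > 0, ∀ t : ℝ, F (t + T) = F t ∧ G (t + T) = G t)
    ↔ F₀ ^ 2 < k * (c - 2 * G₀) := by
  constructor
  · exact backward_dir k c F₀ G₀ hk hc hG₀
  · exact forward_dir k c F₀ G₀ hk hc hG₀
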